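/- Let n, A, B, C be positive integers, and fix a set of A columns, a set of B rows, and a set of C diagonals (each of either orientation) of the n×n board. Then the number of board squares lying simultaneously on one of the chosen columns, one of the chosen rows, and one of the chosen diagonals is at most f(A + B, C) + δ_{A+B}. -/

import Mathlib

/-- The n×n board: squares (x,y) ∈ ℤ×ℤ with 1 ≤ x ≤ n and 1 ≤ y ≤ n. -/
noncomputable def board (n : ℕ) : Finset (ℤ × ℤ) := Finset.Icc 1 (n : ℤ) ×ˢ Finset.Icc 1 (n : ℤ)

/-- A line of the board: a row (fixed y), a column (fixed x), a positive
diagonal (fixed x − y), or a negative diagonal (fixed x + y). -/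
inductive Line : Type where
  | row : ℤ → Line
  | col : ℤ → Line
  | posDiag : ℤ → Line
  | negDiag : ℤ → Line
deriving DecidableEq

/-- The defining condition for a point to be on a given line. -/
def Line.pred : Line → ℤ × ℤ → Prop
  | .row b, p => p.2 = b
  | .col a, p => p.1 = a
  | .posDiag d, p => p.1 - p.2 = d
  | .negDiag s, p => p.1 + p.2 = s

instance (L : Line) (p : ℤ × ℤ) : Decidable (L.pred p) :=
  match L with
  | .row b => inferInstanceAs (Decidable (p.2 = b))
  | .col a => inferInstanceAs (Decidable (p.1 = a))
  | .posDiag d => inferInstanceAs (Decidable (p.1 - p.2 = d))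
  | .negDiag s => inferInstanceAs (Decidable (p.1 + p.2 = s))

/-- The set of squares of the n×n board lying on a line. -/
noncomputable def Line.squares (n : ℕ) (L : Line) : Finset (ℤ × ℤ) := (board n).filter L.pred

/-- The length of a line: its number of board squares. -/
noncomputable def Line.length (n : ℕ) (L : Line) : ℕ := (L.squares n).card

/-- Whether a line is a diagonal (of either orientation). -/
def Line.isDiag : Line → Prop
  | .posDiag _ => True
  | .negDiag _ => True
  | _ => False

/-- The set of board squares attacked by a placement S of queens: squares q on
the board such that some queen p ∈ S with p ≠ q shares a row, column, or
diagonal with q. -/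
noncomputable def attacked (n : ℕ) (S : Finset (ℤ × ℤ)) : Finset (ℤ × ℤ) :=
  S.biUnion fun p => (board n).filter fun q =>
    q ≠ p ∧ (p.1 = q.1 ∨ p.2 = q.2 ∨ p.1 - p.2 = q.1 - q.2 ∨ p.1 + p.2 = q.1 + q.2)

/-- G(m) = ⌊m²/12⌋ + 1 if m ≡ 3, 6, 9 (mod 12) or m = 10; ⌊m²/12⌋ otherwise. -/
def G (m : ℕ) : ℕ :=
  if m % 12 = 3 ∨ m % 12 = 6 ∨ m % 12 = 9 ∨ m = 10 then m ^ 2 / 12 + 1 else m ^ 2 / 12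

/-- f(s,C) = Σ_{ℓ=1}^{⌊(s+2)/4⌋} min(2C, 2s + 4 − 8ℓ). -/
def f (s C : ℕ) : ℕ := ∑ ℓ ∈ Finset.Icc 1 ((s + 2) / 4), min (2 * C) (2 * s + 4 - 8 * ℓ)

/-- δ_s = 1 if s ≡ 2 (mod 4) and δ_s = 0 otherwise. -/
def δ (s : ℕ) : ℕ := if s % 4 = 2 then 1 else 0


namespace QAux

/-- rank of `x` in `s`: number of elements of `s` that are `≤ x`. -/
def rk (s : Finset ℤ) (x : ℤ) : ℕ := (s.filter (fun c => c ≤ x)).card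
/-- corank of `x` in `s`: number of elements of `s` that are `≥ x`. -/
def crk (s : Finset ℤ) (x : ℤ) : ℕ := (s.filter (fun c => x ≤ c)).card

/-- ring index of a point of `cols × rows`. -/
def rho (cols rows : Finset ℤ) (p : ℤ × ℤ) : ℕ :=
  min (min (rk cols p.1) (crk cols p.1)) (min (rk rows p.2) (crk rows p.2))

lemma rk_pos {s : Finset ℤ} {x : ℤ} (hx : x ∈ s) : 1 ≤ rk s x :=
  Finset.card_pos.mpr ⟨x, Finset.mem_filter.mpr ⟨hx, le_refl x⟩⟩

lemma crk_pos {s : Finset ℤ} {x : ℤ} (hx : x ∈ s) : 1 ≤ crk s x :=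
  Finset.card_pos.mpr ⟨x, Finset.mem_filter.mpr ⟨hx, le_refl x⟩⟩

lemma rk_add_crk {s : Finset ℤ} {x : ℤ} (hx : x ∈ s) : rk s x + crk s x = s.card + 1 := by
  have h := Finset.card_union_add_card_inter (s.filter (fun c => c ≤ x))
    (s.filter (fun c => x ≤ c))
  have h1 : s.filter (fun c => c ≤ x) ∪ s.filter (fun c => x ≤ c) = s := by
    ext c
    simp only [Finset.mem_union, Finset.mem_filter]
    constructor
    · rintro (⟨h, _⟩ | ⟨h, _⟩) <;> exact h
    · intro h
      rcases le_total c x with h' | h'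
      · exact Or.inl ⟨h, h'⟩
      · exact Or.inr ⟨h, h'⟩
  have h2 : s.filter (fun c => c ≤ x) ∩ s.filter (fun c => x ≤ c) = {x} := by
    ext c
    simp only [Finset.mem_inter, Finset.mem_filter, Finset.mem_singleton]
    constructor
    · rintro ⟨⟨_, ha⟩, ⟨_, hb⟩⟩; exact le_antisymm ha hb
    · rintro rfl; exact ⟨⟨hx, le_refl c⟩, ⟨hx, le_refl c⟩⟩
  rw [h1, h2] at h
  simp only [Finset.card_singleton] at h
  unfold rk crk
  omega

lemma rk_lt_rk {s : Finset ℤ} {x y : ℤ} (hy : y ∈ s) (hxy : x < y) :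
    rk s x < rk s y := by
  have hins : insert y (s.filter (fun c => c ≤ x)) ⊆ s.filter (fun c => c ≤ y) := by
    intro c hc
    rcases Finset.mem_insert.mp hc with rfl | hc
    · exact Finset.mem_filter.mpr ⟨hy, le_refl c⟩
    · have hc' := Finset.mem_filter.mp hc
      exact Finset.mem_filter.mpr ⟨hc'.1, le_trans hc'.2 hxy.le⟩
  have hnot : y ∉ s.filter (fun c => c ≤ x) := by
    intro hc
    exact absurd (Finset.mem_filter.mp hc).2 (not_le.mpr hxy)
  have hcard := Finset.card_le_card hins
  rw [Finset.card_insert_of_notMem hnot] at hcard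
  unfold rk
  omega

lemma crk_lt_crk {s : Finset ℤ} {x y : ℤ} (hx : x ∈ s) (hxy : x < y) :
    crk s y < crk s x := by
  have hins : insert x (s.filter (fun c => y ≤ c)) ⊆ s.filter (fun c => x ≤ c) := by
    intro c hc
    rcases Finset.mem_insert.mp hc with rfl | hc
    · exact Finset.mem_filter.mpr ⟨hx, le_refl c⟩
    · have hc' := Finset.mem_filter.mp hc
      exact Finset.mem_filter.mpr ⟨hc'.1, le_trans hxy.le hc'.2⟩
  have hnot : x ∉ s.filter (fun c => y ≤ c) := by
    intro hc
    exact absurd (Finset.mem_filter.mp hc).2 (not_le.mpr hxy)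
  have hcard := Finset.card_le_card hins
  rw [Finset.card_insert_of_notMem hnot] at hcard
  unfold crk
  omega

lemma card_rk_between (t : Finset ℤ) (P : ℤ → Prop) [DecidablePred P] (a b : ℕ)
    (h : ∀ x ∈ t, P x → a ≤ rk t x ∧ rk t x ≤ b) :
    (t.filter P).card ≤ b + 1 - a := by
  have hc : (t.filter P).card ≤ (Finset.Icc a b).card := by
    apply Finset.card_le_card_of_injOn (rk t)
    · intro x hx
      have hx' := Finset.mem_filter.mp hx
      exact Finset.mem_Icc.mpr (h x hx'.1 hx'.2)
    · intro x hx y hy hxy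
      have hx' := Finset.mem_filter.mp (Finset.mem_coe.mp hx)
      have hy' := Finset.mem_filter.mp (Finset.mem_coe.mp hy)
      by_contra hne
      rcases lt_or_gt_of_ne hne with h' | h'
      · exact absurd hxy (ne_of_lt (rk_lt_rk hy'.1 h'))
      · exact absurd hxy.symm (ne_of_lt (rk_lt_rk hx'.1 h'))
  rwa [Nat.card_Icc] at hc

end QAux

namespace QAux

/-- A diagonal meets each ring of `cols × rows` in at most two points. -/
lemma diag_two (cols rows : Finset ℤ) (L : Line) (hL : L.isDiag) (ℓ : ℕ)
    (T' : Finset (ℤ × ℤ))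
    (h : ∀ p ∈ T', p.1 ∈ cols ∧ p.2 ∈ rows ∧ rho cols rows p = ℓ ∧ L.pred p) :
    T'.card ≤ 2 := by
  by_contra hcon
  push_neg at hcon
  have hne : T'.Nonempty := Finset.card_pos.mp (by omega)
  obtain ⟨p, hp, hpmin⟩ := T'.exists_min_image Prod.fst hne
  obtain ⟨q, hq, hqmax⟩ := T'.exists_max_image Prod.fst hne
  have h3 : ((T'.erase p).erase q).Nonempty := by
    rw [← Finset.card_pos]
    have e1 := Finset.pred_card_le_card_erase (a := p) (s := T')
    have e2 := Finset.pred_card_le_card_erase (a := q) (s := T'.erase p)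
    omega
  obtain ⟨r, hr⟩ := h3
  have hrq : r ≠ q := (Finset.mem_erase.mp hr).1
  have hrem := Finset.mem_erase.mp (Finset.mem_erase.mp hr).2
  have hrp : r ≠ p := hrem.1
  have hrT : r ∈ T' := hrem.2
  obtain ⟨hpc, hpr, hpρ, hpL⟩ := h p hp
  obtain ⟨hqc, hqr, hqρ, hqL⟩ := h q hq
  obtain ⟨hrc, hrr, hrρ, hrL⟩ := h r hrT
  have four : ∀ z : ℤ × ℤ, rho cols rows z = ℓ →
      ℓ ≤ rk cols z.1 ∧ ℓ ≤ crk cols z.1 ∧ ℓ ≤ rk rows z.2 ∧ ℓ ≤ crk rows z.2 := by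
    intro z hz
    unfold rho at hz
    exact ⟨le_trans (le_of_eq hz.symm) ((min_le_left _ _).trans (min_le_left _ _)),
      le_trans (le_of_eq hz.symm) ((min_le_left _ _).trans (min_le_right _ _)),
      le_trans (le_of_eq hz.symm) ((min_le_right _ _).trans (min_le_left _ _)),
      le_trans (le_of_eq hz.symm) ((min_le_right _ _).trans (min_le_right _ _))⟩
  cases L with
  | row b => simp [Line.isDiag] at hL
  | col a => simp [Line.isDiag] at hL
  | posDiag d =>
    have hpL' : p.1 - p.2 = d := hpL
    have hqL' : q.1 - q.2 = d := hqL
    have hrL' : r.1 - r.2 = d := hrL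
    have hx1 : p.1 < r.1 := by
      rcases lt_or_eq_of_le (hpmin r hrT) with h' | h'
      · exact h'
      · exact absurd (Prod.ext_iff.mpr ⟨h'.symm, by omega⟩) hrp
    have hx2 : r.1 < q.1 := by
      rcases lt_or_eq_of_le (hqmax r hrT) with h' | h'
      · exact h'
      · exact absurd (Prod.ext_iff.mpr ⟨h', by omega⟩) hrq
    have hy1 : p.2 < r.2 := by omega
    have hy2 : r.2 < q.2 := by omega
    have c1 : ℓ < rk cols r.1 := lt_of_le_of_lt (four p hpρ).1 (rk_lt_rk hrc hx1)
    have c2 : ℓ < crk cols r.1 := lt_of_le_of_lt (four q hqρ).2.1 (crk_lt_crk hrc hx2)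
    have c3 : ℓ < rk rows r.2 := lt_of_le_of_lt (four p hpρ).2.2.1 (rk_lt_rk hrr hy1)
    have c4 : ℓ < crk rows r.2 := lt_of_le_of_lt (four q hqρ).2.2.2 (crk_lt_crk hrr hy2)
    have : ℓ < rho cols rows r := lt_min (lt_min c1 c2) (lt_min c3 c4)
    omega
  | negDiag d =>
    have hpL' : p.1 + p.2 = d := hpL
    have hqL' : q.1 + q.2 = d := hqL
    have hrL' : r.1 + r.2 = d := hrL
    have hx1 : p.1 < r.1 := by
      rcases lt_or_eq_of_le (hpmin r hrT) with h' | h'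
      · exact h'
      · exact absurd (Prod.ext_iff.mpr ⟨h'.symm, by omega⟩) hrp
    have hx2 : r.1 < q.1 := by
      rcases lt_or_eq_of_le (hqmax r hrT) with h' | h'
      · exact h'
      · exact absurd (Prod.ext_iff.mpr ⟨h', by omega⟩) hrq
    have hy1 : r.2 < p.2 := by omega
    have hy2 : q.2 < r.2 := by omega
    have c1 : ℓ < rk cols r.1 := lt_of_le_of_lt (four p hpρ).1 (rk_lt_rk hrc hx1)
    have c2 : ℓ < crk cols r.1 := lt_of_le_of_lt (four q hqρ).2.1 (crk_lt_crk hrc hx2)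
    have c3 : ℓ < rk rows r.2 := lt_of_le_of_lt (four q hqρ).2.2.1 (rk_lt_rk hrr hy2)
    have c4 : ℓ < crk rows r.2 := lt_of_le_of_lt (four p hpρ).2.2.2 (crk_lt_crk hrr hy1)
    have : ℓ < rho cols rows r := lt_min (lt_min c1 c2) (lt_min c3 c4)
    omega

end QAux

/-- For any choice of A columns, B rows and C diagonals of the
n×n board, the number of board squares lying on a chosen column, a chosen row
and a chosen diagonal is at most f(A + B, C) + δ_{A+B}. -/

theorem triple_intersection_bound (n A B C : ℕ) (hn : 0 < n) (hA : 0 < A)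
    (hB : 0 < B) (hC : 0 < C)
    (cols rows : Finset ℤ) (diags : Finset Line)
    (hcols : cols ⊆ Finset.Icc 1 (n : ℤ)) (hrows : rows ⊆ Finset.Icc 1 (n : ℤ))
    (hcolsA : cols.card = A) (hrowsB : rows.card = B) (hdiagsC : diags.card = C)
    (hdiag : ∀ L ∈ diags, L.isDiag ∧ (L.squares n).Nonempty) :
    ((board n).filter fun p =>
        p.1 ∈ cols ∧ p.2 ∈ rows ∧ ∃ L ∈ diags, L.pred p).card
      ≤ f (A + B) C + δ (A + B) := by
  have key : ∀ (S : Finset (ℤ × ℤ)),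
      (∀ p ∈ S, p.1 ∈ cols ∧ p.2 ∈ rows ∧ ∃ L ∈ diags, L.pred p) →
      S.card ≤ f (A + B) C + δ (A + B) := by
    intro S hS
    have four : ∀ z : ℤ × ℤ, ∀ ℓ : ℕ, QAux.rho cols rows z = ℓ →
        ℓ ≤ QAux.rk cols z.1 ∧ ℓ ≤ QAux.crk cols z.1 ∧
        ℓ ≤ QAux.rk rows z.2 ∧ ℓ ≤ QAux.crk rows z.2 := by
      intro z ℓ hz
      unfold QAux.rho at hz
      exact ⟨le_trans (le_of_eq hz.symm) ((min_le_left _ _).trans (min_le_left _ _)),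
        le_trans (le_of_eq hz.symm) ((min_le_left _ _).trans (min_le_right _ _)),
        le_trans (le_of_eq hz.symm) ((min_le_right _ _).trans (min_le_left _ _)),
        le_trans (le_of_eq hz.symm) ((min_le_right _ _).trans (min_le_right _ _))⟩
    have hmem : ∀ p ∈ S, QAux.rho cols rows p ∈ Finset.Icc 1 ((A + B + 2) / 4) := by
      intro p hp
      obtain ⟨h1, h2, -⟩ := hS p hp
      have r1 := QAux.rk_pos h1
      have r2 := QAux.crk_pos h1
      have r3 := QAux.rk_pos h2
      have r4 := QAux.crk_pos h2
      have s1 := QAux.rk_add_crk h1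
      have s2 := QAux.rk_add_crk h2
      rw [hcolsA] at s1
      rw [hrowsB] at s2
      have m1 := min_choice (QAux.rk cols p.1) (QAux.crk cols p.1)
      have m2 := min_choice (QAux.rk rows p.2) (QAux.crk rows p.2)
      have l1 : QAux.rho cols rows p ≤ QAux.rk cols p.1 :=
        (min_le_left _ _).trans (min_le_left _ _)
      have l2 : QAux.rho cols rows p ≤ QAux.crk cols p.1 :=
        (min_le_left _ _).trans (min_le_right _ _)
      have l3 : QAux.rho cols rows p ≤ QAux.rk rows p.2 :=
        (min_le_right _ _).trans (min_le_left _ _)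
      have l4 : QAux.rho cols rows p ≤ QAux.crk rows p.2 :=
        (min_le_right _ _).trans (min_le_right _ _)
      have m3 := min_choice (min (QAux.rk cols p.1) (QAux.crk cols p.1))
        (min (QAux.rk rows p.2) (QAux.crk rows p.2))
      rw [Finset.mem_Icc]
      unfold QAux.rho
      unfold QAux.rho at l1 l2 l3 l4
      omega
    rw [Finset.card_eq_sum_card_fiberwise hmem]
    have hbound : ∀ ℓ ∈ Finset.Icc 1 ((A + B + 2) / 4),
        (S.filter (fun p => QAux.rho cols rows p = ℓ)).card
          ≤ min (2 * C) (2 * (A + B) + 4 - 8 * ℓ)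
            + (if A + 1 = 2 * ℓ ∧ B + 1 = 2 * ℓ then 1 else 0) := by
      intro ℓ hℓ
      have hl1 : 1 ≤ ℓ := (Finset.mem_Icc.mp hℓ).1
      -- Bound 1 : at most 2C covered points in ring ℓ
      have hb1 : (S.filter (fun p => QAux.rho cols rows p = ℓ)).card ≤ 2 * C := by
        have hsub : S.filter (fun p => QAux.rho cols rows p = ℓ) ⊆
            diags.biUnion (fun L =>
              (S.filter (fun p => QAux.rho cols rows p = ℓ)).filter (fun p => L.pred p)) := by
          intro p hp
          obtain ⟨-, -, L, hL, hLp⟩ := hS p (Finset.mem_filter.mp hp).1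
          exact Finset.mem_biUnion.mpr ⟨L, hL, Finset.mem_filter.mpr ⟨hp, hLp⟩⟩
        have hper : ∀ L ∈ diags,
            ((S.filter (fun p => QAux.rho cols rows p = ℓ)).filter (fun p => L.pred p)).card
              ≤ 2 := by
          intro L hL
          apply QAux.diag_two cols rows L (hdiag L hL).1 ℓ
          intro p hp
          have hp1 := Finset.mem_filter.mp hp
          have hp2 := Finset.mem_filter.mp hp1.1
          obtain ⟨hc, hr, -⟩ := hS p hp2.1
          exact ⟨hc, hr, hp2.2, hp1.2⟩
        calc (S.filter (fun p => QAux.rho cols rows p = ℓ)).card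
            ≤ (diags.biUnion (fun L =>
              (S.filter (fun p => QAux.rho cols rows p = ℓ)).filter (fun p => L.pred p))).card :=
              Finset.card_le_card hsub
          _ ≤ ∑ L ∈ diags,
              ((S.filter (fun p => QAux.rho cols rows p = ℓ)).filter (fun p => L.pred p)).card :=
              Finset.card_biUnion_le
          _ ≤ ∑ _L ∈ diags, 2 := Finset.sum_le_sum hper
          _ = 2 * C := by rw [Finset.sum_const, smul_eq_mul, hdiagsC, Nat.mul_comm]
      -- Bound 2 : ring size bound
      have hb2 : (S.filter (fun p => QAux.rho cols rows p = ℓ)).card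
          ≤ (2 * (A + B) + 4 - 8 * ℓ) + (if A + 1 = 2 * ℓ ∧ B + 1 = 2 * ℓ then 1 else 0) := by
        rcases (S.filter (fun p => QAux.rho cols rows p = ℓ)).eq_empty_or_nonempty with
          he | ⟨p0, hp0⟩
        · simp [he]
        · have hp0' := Finset.mem_filter.mp hp0
          obtain ⟨h1, h2, -⟩ := hS p0 hp0'.1
          obtain ⟨f1, f2, f3, f4⟩ := four p0 ℓ hp0'.2
          have s1 := QAux.rk_add_crk h1
          have s2 := QAux.rk_add_crk h2
          rw [hcolsA] at s1
          rw [hrowsB] at s2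
          have hA1 : 2 * ℓ ≤ A + 1 := by omega
          have hB1 : 2 * ℓ ≤ B + 1 := by omega
          -- the four boundary sets
          have hVH := Finset.card_filter_add_card_filter_not
            (s := S.filter (fun p => QAux.rho cols rows p = ℓ))
            (p := fun p => QAux.rk cols p.1 = ℓ ∨ QAux.crk cols p.1 = ℓ)
          have hVsub : (S.filter (fun p => QAux.rho cols rows p = ℓ)).filter
              (fun p => QAux.rk cols p.1 = ℓ ∨ QAux.crk cols p.1 = ℓ) ⊆
              (cols.filter (fun x => QAux.rk cols x = ℓ ∨ QAux.crk cols x = ℓ)) ×ˢ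
              (rows.filter (fun y => ℓ ≤ QAux.rk rows y ∧ ℓ ≤ QAux.crk rows y)) := by
            intro p hp
            have hp1 := Finset.mem_filter.mp hp
            have hp2 := Finset.mem_filter.mp hp1.1
            obtain ⟨hc, hr, -⟩ := hS p hp2.1
            obtain ⟨g1, g2, g3, g4⟩ := four p ℓ hp2.2
            exact Finset.mem_product.mpr ⟨Finset.mem_filter.mpr ⟨hc, hp1.2⟩,
              Finset.mem_filter.mpr ⟨hr, g3, g4⟩⟩
          have hHsub : (S.filter (fun p => QAux.rho cols rows p = ℓ)).filter
              (fun p => ¬(QAux.rk cols p.1 = ℓ ∨ QAux.crk cols p.1 = ℓ)) ⊆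
              (cols.filter (fun x => ℓ < QAux.rk cols x ∧ ℓ < QAux.crk cols x)) ×ˢ
              (rows.filter (fun y => QAux.rk rows y = ℓ ∨ QAux.crk rows y = ℓ)) := by
            intro p hp
            have hp1 := Finset.mem_filter.mp hp
            have hp2 := Finset.mem_filter.mp hp1.1
            obtain ⟨hc, hr, -⟩ := hS p hp2.1
            obtain ⟨g1, g2, g3, g4⟩ := four p ℓ hp2.2
            have hne := hp1.2
            push_neg at hne
            have hx : ℓ < QAux.rk cols p.1 ∧ ℓ < QAux.crk cols p.1 := by omega
            have hy : QAux.rk rows p.2 = ℓ ∨ QAux.crk rows p.2 = ℓ := by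
              have hz := hp2.2
              unfold QAux.rho at hz
              have m1 := min_choice (QAux.rk cols p.1) (QAux.crk cols p.1)
              have m2 := min_choice (QAux.rk rows p.2) (QAux.crk rows p.2)
              have m3 := min_choice (min (QAux.rk cols p.1) (QAux.crk cols p.1))
                (min (QAux.rk rows p.2) (QAux.crk rows p.2))
              omega
            exact Finset.mem_product.mpr ⟨Finset.mem_filter.mpr ⟨hc, hx⟩,
              Finset.mem_filter.mpr ⟨hr, hy⟩⟩
          -- cardinalities of the coordinate sets
          have hYs : (rows.filter (fun y => ℓ ≤ QAux.rk rows y ∧ ℓ ≤ QAux.crk rows y)).card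
              ≤ (B + 1 - ℓ) + 1 - ℓ := by
            apply QAux.card_rk_between rows _ ℓ (B + 1 - ℓ)
            intro y hy hPy
            have := QAux.rk_add_crk hy
            rw [hrowsB] at this
            omega
          have hX2 : (cols.filter (fun x => ℓ < QAux.rk cols x ∧ ℓ < QAux.crk cols x)).card
              ≤ (A - ℓ) + 1 - (ℓ + 1) := by
            apply QAux.card_rk_between cols _ (ℓ + 1) (A - ℓ)
            intro x hx hPx
            have := QAux.rk_add_crk hx
            rw [hcolsA] at this
            omega
          have hcrk1 : ∀ (t : Finset ℤ) (m : ℕ),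
              (t.filter (fun x => QAux.crk t x = ℓ)).card ≤ 1 := by
            intro t m
            have := QAux.card_rk_between t (fun x => QAux.crk t x = ℓ)
              (t.card + 1 - ℓ) (t.card + 1 - ℓ) (by
                intro x hx hPx
                have := QAux.rk_add_crk hx
                omega)
            omega
          have hrk1 : ∀ (t : Finset ℤ),
              (t.filter (fun x => QAux.rk t x = ℓ)).card ≤ 1 := by
            intro t
            have := QAux.card_rk_between t (fun x => QAux.rk t x = ℓ) ℓ ℓ (by
              intro x hx hPx
              omega)
            omega
          have hXs2 : (cols.filter (fun x => QAux.rk cols x = ℓ ∨ QAux.crk cols x = ℓ)).card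
              ≤ 2 := by
            rw [Finset.filter_or]
            refine le_trans (Finset.card_union_le _ _) ?_
            have := hrk1 cols
            have := hcrk1 cols 0
            omega
          have hY22 : (rows.filter (fun y => QAux.rk rows y = ℓ ∨ QAux.crk rows y = ℓ)).card
              ≤ 2 := by
            rw [Finset.filter_or]
            refine le_trans (Finset.card_union_le _ _) ?_
            have := hrk1 rows
            have := hcrk1 rows 0
            omega
          have hXs1 : A + 1 = 2 * ℓ →
              (cols.filter (fun x => QAux.rk cols x = ℓ ∨ QAux.crk cols x = ℓ)).card ≤ 1 := by
            intro hA2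
            have he : cols.filter (fun x => QAux.rk cols x = ℓ ∨ QAux.crk cols x = ℓ)
                = cols.filter (fun x => QAux.rk cols x = ℓ) := by
              apply Finset.filter_congr
              intro x hx
              have := QAux.rk_add_crk hx
              rw [hcolsA] at this
              constructor
              · intro h'; omega
              · intro h'; omega
            rw [he]
            exact hrk1 cols
          have hY21 : B + 1 = 2 * ℓ →
              (rows.filter (fun y => QAux.rk rows y = ℓ ∨ QAux.crk rows y = ℓ)).card ≤ 1 := by
            intro hB2
            have he : rows.filter (fun y => QAux.rk rows y = ℓ ∨ QAux.crk rows y = ℓ)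
                = rows.filter (fun y => QAux.rk rows y = ℓ) := by
              apply Finset.filter_congr
              intro y hy
              have := QAux.rk_add_crk hy
              rw [hrowsB] at this
              constructor
              · intro h'; omega
              · intro h'; omega
            rw [he]
            exact hrk1 rows
          have hVc := le_trans (Finset.card_le_card hVsub) (le_of_eq (Finset.card_product _ _))
          have hHc := le_trans (Finset.card_le_card hHsub) (le_of_eq (Finset.card_product _ _))
          by_cases hA2 : A + 1 = 2 * ℓ <;> by_cases hB2 : B + 1 = 2 * ℓ
          · rw [if_pos ⟨hA2, hB2⟩]
            have hv := le_trans hVc (Nat.mul_le_mul (hXs1 hA2) hYs)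
            have hh := le_trans hHc (Nat.mul_le_mul hX2 (hY21 hB2))
            omega
          · rw [if_neg (by tauto)]
            have hv := le_trans hVc (Nat.mul_le_mul (hXs1 hA2) hYs)
            have hh := le_trans hHc (Nat.mul_le_mul hX2 hY22)
            omega
          · rw [if_neg (by tauto)]
            have hv := le_trans hVc (Nat.mul_le_mul hXs2 hYs)
            have hh := le_trans hHc (Nat.mul_le_mul hX2 (hY21 hB2))
            omega
          · rw [if_neg (by tauto)]
            have hv := le_trans hVc (Nat.mul_le_mul hXs2 hYs)
            have hh := le_trans hHc (Nat.mul_le_mul hX2 hY22)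
            omega
      rcases le_total (2 * C) (2 * (A + B) + 4 - 8 * ℓ) with h' | h'
      · rw [min_eq_left h']
        exact le_trans hb1 (Nat.le_add_right _ _)
      · rw [min_eq_right h']
        exact hb2
    calc ∑ ℓ ∈ Finset.Icc 1 ((A + B + 2) / 4),
          (S.filter (fun p => QAux.rho cols rows p = ℓ)).card
        ≤ ∑ ℓ ∈ Finset.Icc 1 ((A + B + 2) / 4),
          (min (2 * C) (2 * (A + B) + 4 - 8 * ℓ)
            + (if A + 1 = 2 * ℓ ∧ B + 1 = 2 * ℓ then 1 else 0)) :=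
          Finset.sum_le_sum hbound
      _ = f (A + B) C + ∑ ℓ ∈ Finset.Icc 1 ((A + B + 2) / 4),
          (if A + 1 = 2 * ℓ ∧ B + 1 = 2 * ℓ then 1 else 0) := by
          rw [Finset.sum_add_distrib]
          rfl
      _ ≤ f (A + B) C + δ (A + B) := by
          apply Nat.add_le_add_left
          by_cases hmod : (A + B) % 4 = 2
          · have hδ : δ (A + B) = 1 := by simp [δ, hmod]
            rw [hδ, ← Finset.card_filter]
            apply Finset.card_le_one.mpr
            intro a ha b hb
            have ha' := (Finset.mem_filter.mp ha).2
            have hb' := (Finset.mem_filter.mp hb).2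
            omega
          · have hδ : δ (A + B) = 0 := by simp [δ, hmod]
            rw [hδ, ← Finset.card_filter]
            have he : (Finset.Icc 1 ((A + B + 2) / 4)).filter
                (fun ℓ => A + 1 = 2 * ℓ ∧ B + 1 = 2 * ℓ) = ∅ := by
              apply Finset.filter_eq_empty_iff.mpr
              intro ℓ _
              intro hcontra
              omega
            rw [he]
            simp
  exact key _ (fun p hp => (Finset.mem_filter.mp hp).2)
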